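/- Let (G,P) and (H,S) be quasi-lattice ordered groups and α: H → Aut(G) an action such that α_s restricts to an automorphism of P for each s ∈ S. Then the pair (G ⋊_α H, P·S) is a quasi-lattice ordered group, where P·S = {ps : p ∈ P, s ∈ S} is a subsemigroup of the semidirect product. Moreover, for g₁,g₂ ∈ P and h₁,h₂ ∈ S, the element (g₁h₁) ∨ (g₂h₂) exists if and only if g₁ ∨ g₂ exists in P and h₁ ∨ h₂ exists in S, and in that case (g₁h₁) ∨ (g₂h₂) = (g₁ ∨ g₂)(h₁ ∨ h₂). -/
import Mathlib


/-- A quasi-lattice ordered group structure on a group `G`: a positive cone `P`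
(submonoid with `P ∩ P⁻¹ = {1}`) such that any two elements of `P` with a common
upper bound (for the left-invariant order `g ≤ h ↔ g⁻¹ * h ∈ P`) have a least
common upper bound in `P`. -/
structure QuasiLattice (G : Type*) [Group G] where
  P : Set G
  one_mem : (1 : G) ∈ P
  mul_mem : ∀ {a b : G}, a ∈ P → b ∈ P → a * b ∈ P
  antisymm' : ∀ g ∈ P, g⁻¹ ∈ P → g = 1
  lub_exists : ∀ p ∈ P, ∀ q ∈ P,
    (∃ r ∈ P, p⁻¹ * r ∈ P ∧ q⁻¹ * r ∈ P) →
    ∃ r ∈ P, p⁻¹ * r ∈ P ∧ q⁻¹ * r ∈ P ∧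
      ∀ s ∈ P, p⁻¹ * s ∈ P → q⁻¹ * s ∈ P → r⁻¹ * s ∈ P

namespace QuasiLattice

variable {G G' : Type*} [Group G] [Group G']

/-- The left-invariant partial order induced by the positive cone. -/
def le (Q : QuasiLattice G) (g h : G) : Prop := g⁻¹ * h ∈ Q.P

/-- `p` and `q` have a common upper bound in `P` (i.e. `p ∨ q < ∞`). -/
def HasCUB (Q : QuasiLattice G) (p q : G) : Prop := ∃ r ∈ Q.P, Q.le p r ∧ Q.le q r

/-- `r` is the least common upper bound of `p` and `q` in `P`. -/
def IsLub (Q : QuasiLattice G) (p q r : G) : Prop :=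
  r ∈ Q.P ∧ Q.le p r ∧ Q.le q r ∧ ∀ s ∈ Q.P, Q.le p s → Q.le q s → Q.le r s

end QuasiLattice

/-- A controlled map between quasi-lattice ordered groups: an order-preserving group
homomorphism, finite-to-one on `P`, respecting least upper bounds. -/
structure ControlledMap {G G' : Type*} [Group G] [Group G']
    (Q : QuasiLattice G) (Q' : QuasiLattice G') where
  toFun : G →* G'
  mapsP : ∀ p ∈ Q.P, toFun p ∈ Q'.P
  finite_fibers : ∀ g' : G', {p | p ∈ Q.P ∧ toFun p = g'}.Finite
  map_lub : ∀ p ∈ Q.P, ∀ q ∈ Q.P, ∀ r, Q.IsLub p q r →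
    Q'.IsLub (toFun p) (toFun q) (toFun r)

namespace ControlledMap

variable {G G' : Type*} [Group G] [Group G'] {Q : QuasiLattice G} {Q' : QuasiLattice G'}

/-- `p` is a minimal element of `ϑ⁻¹([m,∞]) ∩ P`. -/
def Minimal (θ : ControlledMap Q Q') (m : G') (p : G) : Prop :=
  p ∈ Q.P ∧ Q'.le m (θ.toFun p) ∧
    ∀ r ∈ Q.P, Q'.le m (θ.toFun r) → Q.le r p → r = p

/-- The minimality property of a controlled map: distinct minimal elements of
`ϑ⁻¹([m,∞]) ∩ P` have no common upper bound in `P`. -/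
def MinimalityProperty (θ : ControlledMap Q Q') : Prop :=
  ∀ m ∈ Q'.P, ∀ p q : G, θ.Minimal m p → θ.Minimal m q → p ≠ q → ¬ Q.HasCUB p q

end ControlledMap

/-- The quasi-lattice ordered group `(ℤ^κ, ℤ₊^κ)` (written multiplicatively). -/
def ZQL (κ : Type*) : QuasiLattice (Multiplicative (κ → ℤ)) where
  P := {x | ∀ i, 0 ≤ Multiplicative.toAdd x i}
  one_mem := fun i => le_refl 0
  mul_mem := fun {a b} ha hb i => add_nonneg (ha i) (hb i)
  antisymm' := fun g hg hg' => by
    have h : ∀ i, Multiplicative.toAdd g i = 0 := fun i => by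
      have h1 := hg i
      have h2 := hg' i
      simp only [toAdd_inv, Pi.neg_apply] at h2
      omega
    have : Multiplicative.toAdd g = 0 := funext h
    simpa using this
  lub_exists := fun p hp q hq _ => by
    refine ⟨Multiplicative.ofAdd
      (fun i => max (Multiplicative.toAdd p i) (Multiplicative.toAdd q i)), ?_, ?_, ?_, ?_⟩
    · intro i
      have := hp i
      simp only [toAdd_ofAdd]
      omega
    · intro i
      simp only [toAdd_mul, toAdd_inv, Pi.add_apply,
        Pi.neg_apply, toAdd_ofAdd]
      omega
    · intro i
      simp only [toAdd_mul, toAdd_inv, Pi.add_apply,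
        Pi.neg_apply, toAdd_ofAdd]
      omega
    · intro s _ hps hqs i
      have h1 := hps i
      have h2 := hqs i
      simp only [toAdd_mul, toAdd_inv, Pi.add_apply,
        Pi.neg_apply, toAdd_ofAdd] at h1 h2 ⊢
      omega

section Aux
variable {G H : Type*} [Group G] [Group H]

lemma sdp_inv_mul_left (α : H →* MulAut G) (x y : G ⋊[α] H) :
    (x⁻¹ * y).left = α x.right⁻¹ (x.left⁻¹ * y.left) := by
  simp [map_mul]

lemma sdp_inv_mul_right (α : H →* MulAut G) (x y : G ⋊[α] H) :
    (x⁻¹ * y).right = x.right⁻¹ * y.right := by simp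

end Aux

/-- If `(G,P)` and `(H,S)` are quasi-lattice ordered groups and
`α : H → Aut(G)` restricts to automorphisms of `P` on `S`, then `(G ⋊_α H, P·S)` is a
quasi-lattice ordered group; moreover `(g₁h₁) ∨ (g₂h₂)` exists iff `g₁ ∨ g₂` and
`h₁ ∨ h₂` exist, in which case `(g₁h₁) ∨ (g₂h₂) = (g₁ ∨ g₂)(h₁ ∨ h₂)`. -/
theorem semidirectProduct_quasiLattice {G H : Type*} [Group G] [Group H]
    (Q : QuasiLattice G) (QS : QuasiLattice H) (α : H →* MulAut G)
    (hα : ∀ s ∈ QS.P, ∀ g : G, g ∈ Q.P ↔ α s g ∈ Q.P) :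
    ∃ QSD : QuasiLattice (G ⋊[α] H),
      QSD.P = {x : G ⋊[α] H | x.left ∈ Q.P ∧ x.right ∈ QS.P} ∧
      ∀ g₁ ∈ Q.P, ∀ g₂ ∈ Q.P, ∀ h₁ ∈ QS.P, ∀ h₂ ∈ QS.P,
        (QSD.HasCUB ⟨g₁, h₁⟩ ⟨g₂, h₂⟩ ↔ Q.HasCUB g₁ g₂ ∧ QS.HasCUB h₁ h₂) ∧
        (∀ g h, Q.IsLub g₁ g₂ g → QS.IsLub h₁ h₂ h →
          QSD.IsLub ⟨g₁, h₁⟩ ⟨g₂, h₂⟩ ⟨g, h⟩) := by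
  -- key: for s ∈ S, α s⁻¹ g ∈ P ↔ g ∈ P
  have key : ∀ s ∈ QS.P, ∀ g : G, α s⁻¹ g ∈ Q.P ↔ g ∈ Q.P := by
    intro s hs g
    rw [hα s hs (α s⁻¹ g)]
    simp
  -- the order condition for elements whose right part lies in S
  have hle : ∀ x y : G ⋊[α] H, x.right ∈ QS.P →
      (x⁻¹ * y ∈ {x : G ⋊[α] H | x.left ∈ Q.P ∧ x.right ∈ QS.P} ↔
        x.left⁻¹ * y.left ∈ Q.P ∧ x.right⁻¹ * y.right ∈ QS.P) := by
    intro x y hx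
    constructor
    · rintro ⟨h1, h2⟩
      rw [sdp_inv_mul_left] at h1
      rw [sdp_inv_mul_right] at h2
      exact ⟨(key x.right hx _).mp h1, h2⟩
    · rintro ⟨h1, h2⟩
      refine ⟨?_, ?_⟩
      · rw [sdp_inv_mul_left]
        exact (key x.right hx _).mpr h1
      · rw [sdp_inv_mul_right]; exact h2
  refine ⟨⟨{x : G ⋊[α] H | x.left ∈ Q.P ∧ x.right ∈ QS.P}, ?_, ?_, ?_, ?_⟩, rfl, ?_⟩
  · exact ⟨Q.one_mem, QS.one_mem⟩
  · rintro a b ⟨ha1, ha2⟩ ⟨hb1, hb2⟩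
    refine ⟨?_, QS.mul_mem ha2 hb2⟩
    show a.left * α a.right b.left ∈ Q.P
    exact Q.mul_mem ha1 ((hα a.right ha2 b.left).mp hb1)
  · rintro x ⟨hx1, hx2⟩ ⟨hy1, hy2⟩
    rw [SemidirectProduct.inv_right] at hy2
    have hr : x.right = 1 := QS.antisymm' x.right hx2 hy2
    rw [SemidirectProduct.inv_left, hr] at hy1
    simp only [inv_one, map_one, MulAut.one_apply] at hy1
    have hl : x.left = 1 := Q.antisymm' x.left hx1 hy1
    ext <;> simp [hl, hr]
  · rintro p hp q hq ⟨r, hr, hpr, hqr⟩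
    have h1 := (hle p r hp.2).mp ⟨(sdp_inv_mul_left α p r ▸ hpr.1 : _), (sdp_inv_mul_right α p r ▸ hpr.2 : _)⟩
    have h2 := (hle q r hq.2).mp ⟨(sdp_inv_mul_left α q r ▸ hqr.1 : _), (sdp_inv_mul_right α q r ▸ hqr.2 : _)⟩
    obtain ⟨g, hg, hg1, hg2, hglub⟩ :=
      Q.lub_exists p.left hp.1 q.left hq.1 ⟨r.left, hr.1, h1.1, h2.1⟩
    obtain ⟨h, hh, hh1, hh2, hhlub⟩ :=
      QS.lub_exists p.right hp.2 q.right hq.2 ⟨r.right, hr.2, h1.2, h2.2⟩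
    refine ⟨⟨g, h⟩, ⟨hg, hh⟩, ?_, ?_, ?_⟩
    · exact (hle p ⟨g, h⟩ hp.2).mpr ⟨hg1, hh1⟩
    · exact (hle q ⟨g, h⟩ hq.2).mpr ⟨hg2, hh2⟩
    · intro s hs hps hqs
      have h1 := (hle p s hp.2).mp hps
      have h2 := (hle q s hq.2).mp hqs
      exact (hle ⟨g, h⟩ s hh).mpr
        ⟨hglub s.left hs.1 h1.1 h2.1, hhlub s.right hs.2 h1.2 h2.2⟩
  · intro g₁ hg₁ g₂ hg₂ h₁ hh₁ h₂ hh₂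
    constructor
    · constructor
      · rintro ⟨r, hr, hpr, hqr⟩
        have h1 := (hle ⟨g₁, h₁⟩ r hh₁).mp hpr
        have h2 := (hle ⟨g₂, h₂⟩ r hh₂).mp hqr
        exact ⟨⟨r.left, hr.1, h1.1, h2.1⟩, ⟨r.right, hr.2, h1.2, h2.2⟩⟩
      · rintro ⟨⟨g, hg, hg1, hg2⟩, ⟨h, hh, hh1, hh2⟩⟩
        exact ⟨⟨g, h⟩, ⟨hg, hh⟩,
          (hle ⟨g₁, h₁⟩ ⟨g, h⟩ hh₁).mpr ⟨hg1, hh1⟩,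
          (hle ⟨g₂, h₂⟩ ⟨g, h⟩ hh₂).mpr ⟨hg2, hh2⟩⟩
    · rintro g h ⟨hg, hg1, hg2, hglub⟩ ⟨hh, hh1, hh2, hhlub⟩
      refine ⟨⟨hg, hh⟩, ?_, ?_, ?_⟩
      · exact (hle ⟨g₁, h₁⟩ ⟨g, h⟩ hh₁).mpr ⟨hg1, hh1⟩
      · exact (hle ⟨g₂, h₂⟩ ⟨g, h⟩ hh₂).mpr ⟨hg2, hh2⟩
      · intro s hs hps hqs
        have h1 := (hle ⟨g₁, h₁⟩ s hh₁).mp hps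
        have h2 := (hle ⟨g₂, h₂⟩ s hh₂).mp hqs
        exact (hle ⟨g, h⟩ s hh).mpr
          ⟨hglub s.left hs.1 h1.1 h2.1, hhlub s.right hs.2 h1.2 h2.2⟩
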